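/- arXiv:2006.11951 — 6 statements merged into one kernel-verified Lean document; each statement's English description precedes it below -/
import Mathlib

section
/- Suppose the Grushin problem associated to bounded operators P : X₁ → X₂, R₋ : X₋ → X₂, R₊ : X₁ → X₊ is well-posed, with inverse written in block form with blocks E : X₂ → X₁, E₊ : X₊ → X₁, E₋ : X₂ → X₋, E₋₊ : X₊ → X₋. Then P is invertible (i.e. admits a bounded two-sided inverse X₂ → X₁) if and only if E₋₊ is invertible (admits a bounded two-sided inverse X₋ → X₊). -/
/-- **Grushin problem: P is invertible iff E₋₊ is invertible.**
The Grushin problem `𝒫(u, u₋) = (P u + R₋ u₋, R₊ u)` is assumed well-posed,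
with inverse `ℰ(v, v₊) = (E v + E₊ v₊, E₋ v + E₋₊ v₊)`. -/
theorem grushin_P_invertible_iff_Emp_invertible
    {X₁ X₂ Xm Xp : Type*}
    [NormedAddCommGroup X₁] [NormedSpace ℂ X₁] [CompleteSpace X₁]
    [NormedAddCommGroup X₂] [NormedSpace ℂ X₂] [CompleteSpace X₂]
    [NormedAddCommGroup Xm] [NormedSpace ℂ Xm] [CompleteSpace Xm]
    [NormedAddCommGroup Xp] [NormedSpace ℂ Xp] [CompleteSpace Xp]
    (P : X₁ →L[ℂ] X₂) (Rm : Xm →L[ℂ] X₂) (Rp : X₁ →L[ℂ] Xp)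
    (E : X₂ →L[ℂ] X₁) (Ep : Xp →L[ℂ] X₁) (Em : X₂ →L[ℂ] Xm) (Emp : Xp →L[ℂ] Xm)
    (hleft : ∀ (u : X₁) (um : Xm),
      E (P u + Rm um) + Ep (Rp u) = u ∧ Em (P u + Rm um) + Emp (Rp u) = um)
    (hright : ∀ (v : X₂) (vp : Xp),
      P (E v + Ep vp) + Rm (Em v + Emp vp) = v ∧ Rp (E v + Ep vp) = vp) :
    (∃ Q : X₂ →L[ℂ] X₁, (∀ u, Q (P u) = u) ∧ (∀ v, P (Q v) = v)) ↔
      (∃ G : Xm →L[ℂ] Xp, (∀ w, G (Emp w) = w) ∧ (∀ w, Emp (G w) = w)) := by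
  have h1 : ∀ u : X₁, E (P u) + Ep (Rp u) = u := fun u => by
    simpa using (hleft u 0).1
  have h2 : ∀ u : X₁, Em (P u) + Emp (Rp u) = 0 := fun u => by
    simpa using (hleft u 0).2
  have h3 : ∀ um : Xm, E (Rm um) = 0 := fun um => by
    simpa using (hleft 0 um).1
  have h4 : ∀ um : Xm, Em (Rm um) = um := fun um => by
    simpa using (hleft 0 um).2
  have h5 : ∀ vp : Xp, P (Ep vp) + Rm (Emp vp) = 0 := fun vp => by
    simpa using (hright 0 vp).1
  have h6 : ∀ vp : Xp, Rp (Ep vp) = vp := fun vp => by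
    simpa using (hright 0 vp).2
  have h7 : ∀ v : X₂, P (E v) + Rm (Em v) = v := fun v => by
    simpa using (hright v 0).1
  have h8 : ∀ v : X₂, Rp (E v) = 0 := fun v => by
    simpa using (hright v 0).2
  constructor
  · rintro ⟨Q, hQP, hPQ⟩
    refine ⟨-(Rp.comp (Q.comp Rm)), fun w => ?_, fun w => ?_⟩
    · have : Rm (Emp w) = -(P (Ep w)) := eq_neg_of_add_eq_zero_right (h5 w)
      simp only [ContinuousLinearMap.neg_apply, ContinuousLinearMap.comp_apply, this]
      rw [map_neg, hQP, map_neg, neg_neg, h6]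
    · simp only [ContinuousLinearMap.neg_apply, ContinuousLinearMap.comp_apply, map_neg]
      have key : Emp (Rp (Q (Rm w))) = -(Em (P (Q (Rm w)))) := by
        exact eq_neg_of_add_eq_zero_right (h2 (Q (Rm w)))
      rw [key, hPQ, h4, neg_neg]
  · rintro ⟨G, hGE, hEG⟩
    refine ⟨E - Ep.comp (G.comp Em), fun u => ?_, fun v => ?_⟩
    · simp only [ContinuousLinearMap.sub_apply, ContinuousLinearMap.comp_apply]
      have hE : E (P u) = u - Ep (Rp u) := eq_sub_of_add_eq (h1 u)
      have hEm : Em (P u) = -(Emp (Rp u)) := eq_neg_of_add_eq_zero_left (h2 u)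
      rw [hE, hEm, map_neg, hGE, map_neg]
      abel
    · simp only [ContinuousLinearMap.sub_apply, ContinuousLinearMap.comp_apply, map_sub]
      have hPE : P (E v) = v - Rm (Em v) := eq_sub_of_add_eq (h7 v)
      have hPEp : P (Ep (G (Em v))) = -(Rm (Emp (G (Em v)))) :=
        eq_neg_of_add_eq_zero_left (h5 (G (Em v)))
      rw [hPE, hPEp, hEG]
      abel
end

section
/- Suppose the Grushin problem associated to bounded operators P : X₁ → X₂, R₋ : X₋ → X₂, R₊ : X₁ → X₊ is well-posed with inverse blocks E, E₊, E₋, E₋₊. Let B : X₁ → X₂ be a bounded operator such that ‖E B‖_{X₁→X₁} < 1 and ‖B E‖_{X₂→X₂} < 1. Then the Grushin problem associated to P + B (with the same R₋, R₊) is well-posed, and its lower-right inverse block F₋₊ : X₊ → X₋ is given by the norm-convergent series F₋₊ = E₋₊ + Σ_{ℓ=1}^∞ (−1)^ℓ E₋ B (E B)^{ℓ−1} E₊. -/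
/-- **Perturbed Grushin problem (Lemma C.3 of Dyatlov–Zworski).**
If the Grushin problem for `P` is well-posed with inverse blocks `E, E₊, E₋, E₋₊`,
and `B` is a bounded operator with `‖E B‖ < 1` and `‖B E‖ < 1`, then the Grushin
problem for `P + B` (with the same `R₋, R₊`) is well-posed, and its lower-right
inverse block is `F₋₊ = E₋₊ + Σ_{ℓ≥1} (−1)^ℓ E₋ B (E B)^{ℓ−1} E₊`,
the series being norm-convergent (summable). -/
theorem grushin_perturbation_series
    {X₁ X₂ Xm Xp : Type*}
    [NormedAddCommGroup X₁] [NormedSpace ℂ X₁] [CompleteSpace X₁]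
    [NormedAddCommGroup X₂] [NormedSpace ℂ X₂] [CompleteSpace X₂]
    [NormedAddCommGroup Xm] [NormedSpace ℂ Xm] [CompleteSpace Xm]
    [NormedAddCommGroup Xp] [NormedSpace ℂ Xp] [CompleteSpace Xp]
    (P : X₁ →L[ℂ] X₂) (Rm : Xm →L[ℂ] X₂) (Rp : X₁ →L[ℂ] Xp)
    (E : X₂ →L[ℂ] X₁) (Ep : Xp →L[ℂ] X₁) (Em : X₂ →L[ℂ] Xm) (Emp : Xp →L[ℂ] Xm)
    (hleft : ∀ (u : X₁) (um : Xm),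
      E (P u + Rm um) + Ep (Rp u) = u ∧ Em (P u + Rm um) + Emp (Rp u) = um)
    (hright : ∀ (v : X₂) (vp : Xp),
      P (E v + Ep vp) + Rm (Em v + Emp vp) = v ∧ Rp (E v + Ep vp) = vp)
    (B : X₁ →L[ℂ] X₂)
    (hEB : ‖E.comp B‖ < 1) (hBE : ‖B.comp E‖ < 1) :
    ∃ (F : X₂ →L[ℂ] X₁) (Fp : Xp →L[ℂ] X₁) (Fm : X₂ →L[ℂ] Xm) (Fmp : Xp →L[ℂ] Xm),
      (∀ (u : X₁) (um : Xm),
        F ((P + B) u + Rm um) + Fp (Rp u) = u ∧ Fm ((P + B) u + Rm um) + Fmp (Rp u) = um) ∧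
      (∀ (v : X₂) (vp : Xp),
        (P + B) (F v + Fp vp) + Rm (Fm v + Fmp vp) = v ∧ Rp (F v + Fp vp) = vp) ∧
      Summable (fun ℓ : ℕ =>
        ((-1 : ℂ) ^ (ℓ + 1)) • (Em.comp (B.comp (((E.comp B) ^ ℓ).comp Ep)))) ∧
      Fmp = Emp + ∑' ℓ : ℕ,
        ((-1 : ℂ) ^ (ℓ + 1)) • (Em.comp (B.comp (((E.comp B) ^ ℓ).comp Ep))) := by
  -- pointwise identities
  have h1 : ∀ u : X₁, E (P u) + Ep (Rp u) = u := fun u => by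
    have := (hleft u 0).1; simpa using this
  have h2 : ∀ um : Xm, E (Rm um) = 0 := fun um => by
    have := (hleft 0 um).1; simpa using this
  have h3 : ∀ u : X₁, Em (P u) + Emp (Rp u) = 0 := fun u => by
    have := (hleft u 0).2; simpa using this
  have h4 : ∀ um : Xm, Em (Rm um) = um := fun um => by
    have := (hleft 0 um).2; simpa using this
  have h5 : ∀ v : X₂, P (E v) + Rm (Em v) = v := fun v => by
    have := (hright v 0).1; simpa using this
  have h6 : ∀ v : X₂, Rp (E v) = 0 := fun v => by
    have := (hright v 0).2; simpa using this
  have h7 : ∀ vp : Xp, P (Ep vp) + Rm (Emp vp) = 0 := fun vp => by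
    have := (hright 0 vp).1; simpa using this
  have h8 : ∀ vp : Xp, Rp (Ep vp) = vp := fun vp => by
    have := (hright 0 vp).2; simpa using this
  -- the inverse of 1 + E B
  have hT : ‖(-(E.comp B))‖ < 1 := by simpa using hEB
  set u1 : (X₁ →L[ℂ] X₁)ˣ := Units.oneSub (-(E.comp B)) hT with hu1def
  set A : X₁ →L[ℂ] X₁ := (↑u1⁻¹ : X₁ →L[ℂ] X₁) with hAdef
  have hu1val : (u1 : X₁ →L[ℂ] X₁) = 1 + E.comp B := by
    simp [hu1def, Units.oneSub, sub_neg_eq_add]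
  have hA1 : ∀ x : X₁, A (x + E (B x)) = x := by
    intro x
    have h := congrArg (fun f : X₁ →L[ℂ] X₁ => f x) u1.inv_mul
    simpa [hu1val] using h
  have hA2 : ∀ x : X₁, A x + E (B (A x)) = x := by
    intro x
    have h := congrArg (fun f : X₁ →L[ℂ] X₁ => f x) u1.mul_inv
    simpa [hu1val] using h
  set K : X₁ →L[ℂ] Xm := Em.comp (B.comp A) with hKdef
  have hgeo : Summable (fun n : ℕ => (-(E.comp B)) ^ n) :=
    summable_geometric_of_norm_lt_one hT
  set L : (X₁ →L[ℂ] X₁) →L[ℂ] (Xp →L[ℂ] Xm) :=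
    (ContinuousLinearMap.compL ℂ Xp X₁ Xm (Em.comp B)).comp
      ((ContinuousLinearMap.compL ℂ Xp X₁ X₁).flip Ep) with hLdef
  have hf : ∀ ℓ : ℕ,
      ((-1 : ℂ) ^ (ℓ + 1)) • (Em.comp (B.comp (((E.comp B) ^ ℓ).comp Ep)))
        = (-L) ((-(E.comp B)) ^ ℓ) := by
    intro ℓ
    have hneg : (-(E.comp B)) ^ ℓ = ((-1 : ℂ) ^ ℓ) • (E.comp B) ^ ℓ := by
      rw [← neg_one_smul ℂ (E.comp B), smul_pow]
    rw [ContinuousLinearMap.neg_apply, hneg, map_smul]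
    rw [show L ((E.comp B) ^ ℓ) = (Em.comp B).comp (((E.comp B) ^ ℓ).comp Ep) from rfl]
    rw [pow_succ]
    ext x
    simp [mul_smul, ContinuousLinearMap.comp_apply]
  have hAtsum : A = ∑' n : ℕ, (-(E.comp B)) ^ n := rfl
  have hAtsum_symm := hAtsum.symm
  refine ⟨A.comp E, A.comp Ep, Em - K.comp E, Emp - K.comp Ep, ?_, ?_, ?_, ?_⟩
  · -- left inverse
    intro u um
    have hEw : E ((P + B) u + Rm um) = u + E (B u) - Ep (Rp u) := by
      simp only [ContinuousLinearMap.add_apply, map_add, h2 um]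
      rw [add_zero, eq_sub_of_add_eq (h1 u)]; abel
    have hAEw : A (E ((P + B) u + Rm um)) = u - A (Ep (Rp u)) := by
      rw [hEw, sub_eq_add_neg, map_add, map_neg, hA1 u, ← sub_eq_add_neg]
    constructor
    · simp only [ContinuousLinearMap.comp_apply, hAEw]
      abel
    · have hEmw : Em ((P + B) u + Rm um) = Em (P u) + Em (B u) + um := by
        simp only [ContinuousLinearMap.add_apply, map_add, h4 um]
      simp only [ContinuousLinearMap.sub_apply, ContinuousLinearMap.comp_apply, hKdef,
        hAEw, hEmw, map_sub]
      rw [eq_neg_of_add_eq_zero_left (h3 u)]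
      abel
  · -- right inverse
    intro v vp
    have hFv : A (E v) + A (Ep vp) = A (E v + Ep vp) := (map_add A _ _).symm
    set w : X₁ := E v + Ep vp with hw
    set a : X₁ := A w with ha
    have haw : a + E (B a) = w := hA2 w
    have hPa : P a + P (E (B a)) = P w := by rw [← map_add, haw]
    have hPw : P w = v - Rm (Em v) - Rm (Emp vp) := by
      rw [hw, map_add, eq_sub_of_add_eq (h5 v), eq_neg_of_add_eq_zero_left (h7 vp)]
      abel
    have hPEBa : P (E (B a)) = B a - Rm (Em (B a)) := eq_sub_of_add_eq (h5 (B a))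
    have hBa : Em (B a) = Em (B (A (E v))) + Em (B (A (Ep vp))) := by
      rw [ha, hw, map_add A, map_add B, map_add Em]
    constructor
    · simp only [ContinuousLinearMap.comp_apply, ContinuousLinearMap.add_apply,
        ContinuousLinearMap.sub_apply, hFv, ← hw, ← ha, hKdef]
      rw [show P a = P w - P (E (B a)) from eq_sub_of_add_eq hPa,
        hPw, hPEBa,
        show Em v - Em (B (A (E v))) + (Emp vp - Em (B (A (Ep vp)))) =
          Em v + Emp vp - Em (B a) from by rw [hBa]; abel,
        map_sub Rm, map_add Rm]
      abel
    · simp only [ContinuousLinearMap.comp_apply, hFv, ← hw, ← ha]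
      rw [eq_sub_of_add_eq haw, map_sub, h6 (B a), hw, map_add, h6 v, h8 vp]
      abel
  · -- summability
    simp only [hf]
    exact hgeo.map (AddMonoidHomClass.toAddMonoidHom (-L)) (-L).continuous
  · -- the series formula
    have hsum : ∑' ℓ : ℕ,
        ((-1 : ℂ) ^ (ℓ + 1)) • (Em.comp (B.comp (((E.comp B) ^ ℓ).comp Ep)))
          = (-L) A := by
      rw [tsum_congr hf, ← ContinuousLinearMap.map_tsum (-L) hgeo]
      congr 1
    rw [hsum, show (-L) A = -(K.comp Ep) from by rw [ContinuousLinearMap.neg_apply]; rfl]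
    abel
end

section
/- Let X be a complex Banach space, P : X → X a bounded operator, λ, ζ ∈ ℂ, m ≥ 1, and let u₁, …, u_m ∈ X and bounded linear functionals φ₁, …, φ_m ∈ X* satisfy φ_i(u_j) = δ_{ij}, P u_j = λ u_j, and φ_j ∘ P = λ φ_j for all i, j. Let Π : X → X be the projection Π v = Σ_{j=1}^m φ_j(v) u_j, and suppose A : X → X is a bounded operator with (P − ζ) A = A (P − ζ) = I − Π, A u_j = 0, and φ_j ∘ A = 0 for all j. Define R₋ : ℂ^m → X by R₋ w = Σ_j w_j u_j and R₊ : X → ℂ^m by R₊ v = (φ₁(v), …, φ_m(v)). Then the block operator 𝒫 : X × ℂ^m → X × ℂ^m, 𝒫(u, u₋) = ((P − ζ) u + R₋ u₋, R₊ u), is invertible, with inverse ℰ(v, v₊) = (A v + Σ_j v₊^j u_j, (φ_j(v))_j + (ζ − λ) v₊). -/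
open scoped BigOperators

/-- **The Grushin problem at an eigenvalue of multiplicity m.**
With `u₁, …, u_m` eigenvectors, `φ₁, …, φ_m` dual (co-)eigenfunctionals,
`Π v = Σ φ_j(v) u_j` and `A` a "regular part" of the resolvent at `ζ`, the block
operator `𝒫(u, u₋) = ((P − ζ)u + Σ u₋ʲ u_j, (φ_j u)_j)` is invertible with inverse
`ℰ(v, v₊) = (A v + Σ v₊ʲ u_j, (φ_j v)_j + (ζ − λ) v₊)`. -/
theorem grushin_at_eigenvalue
    {X : Type*} [NormedAddCommGroup X] [NormedSpace ℂ X] [CompleteSpace X]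
    (P : X →L[ℂ] X) (lam ζ : ℂ) (m : ℕ) (hm : 1 ≤ m)
    (u : Fin m → X) (φ : Fin m → (X →L[ℂ] ℂ))
    (hdual : ∀ i j, φ i (u j) = if i = j then 1 else 0)
    (heig : ∀ j, P (u j) = lam • u j)
    (hcoeig : ∀ j x, φ j (P x) = lam * φ j x)
    (A : X →L[ℂ] X)
    (hPA : ∀ v, P (A v) - ζ • A v = v - ∑ j, φ j v • u j)
    (hAP : ∀ v, A (P v - ζ • v) = v - ∑ j, φ j v • u j)
    (hAu : ∀ j, A (u j) = 0)
    (hφA : ∀ j v, φ j (A v) = 0) :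
    (∀ (w : X) (wm : Fin m → ℂ),
      A ((P w - ζ • w) + ∑ j, wm j • u j) + ∑ j, φ j w • u j = w ∧
      ∀ j, φ j ((P w - ζ • w) + ∑ i, wm i • u i) + (ζ - lam) * φ j w = wm j) ∧
    (∀ (v : X) (vp : Fin m → ℂ),
      (P (A v + ∑ j, vp j • u j) - ζ • (A v + ∑ j, vp j • u j))
          + ∑ j, (φ j v + (ζ - lam) * vp j) • u j = v ∧
      ∀ j, φ j (A v + ∑ i, vp i • u i) = vp j) := by
  constructor
  · intro w wm
    constructor
    · rw [map_add, hAP, map_sum]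
      simp [hAu]
    · intro j
      rw [map_add, map_sub, map_smul, map_sum, hcoeig]
      simp only [map_smul, hdual, smul_eq_mul, mul_ite, mul_one, mul_zero]
      rw [Finset.sum_ite_eq Finset.univ j wm]
      simp; ring
  · intro v vp
    constructor
    · have h : P (A v) = (v - ∑ j, φ j v • u j) + ζ • A v :=
        sub_eq_iff_eq_add.mp (hPA v)
      have step : ∀ j ∈ Finset.univ, (φ j v + (ζ - lam) * vp j) • u j
          = ζ • (vp j • u j) - vp j • P (u j) + φ j v • u j := by
        intro j _; rw [heig]; module
      rw [Finset.sum_congr rfl step, map_add, map_sum]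
      simp only [map_smul, smul_add, Finset.smul_sum, Finset.sum_add_distrib,
        Finset.sum_sub_distrib, h]
      abel
    · intro j
      rw [map_add, hφA, map_sum]
      simp only [map_smul, hdual, smul_eq_mul, mul_ite, mul_one, mul_zero]
      rw [Finset.sum_ite_eq Finset.univ j vp]
      simp
end

section
/- Let X be a complex Banach space, m ≥ 1, and let R₋ : ℂ^m → X and R₊ : X → ℂ^m be fixed bounded operators. Let s ↦ P(s) be a twice continuously differentiable map from an open interval I around 0 into the bounded operators on X (with the operator norm), and suppose that for every s ∈ I the Grushin problem 𝒫(s)(u, u₋) = (P(s) u + R₋ u₋, R₊ u) is well-posed, with inverse blocks E(s) : X → X, E₊(s) : ℂ^m → X, E₋(s) : X → ℂ^m, E₋₊(s) : ℂ^m → ℂ^m. Then s ↦ E₋₊(s) is twice continuously differentiable and, writing Ṗ = P'(0), P̈ = P''(0) and E = E(0), E₊ = E₊(0), E₋ = E₋(0), one has (d/ds)E₋₊(0) = − E₋ Ṗ E₊ and (d²/ds²)E₋₊(0) = 2 E₋ Ṗ E Ṗ E₊ − E₋ P̈ E₊. -/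
open ContinuousLinearMap

section GrushinAux

variable {X : Type*} [NormedAddCommGroup X] [NormedSpace ℂ X] (m : ℕ)

/-- Lift of an operator on `X` to the top-left block of the product space. -/
noncomputable def grushinΦ : (X →L[ℂ] X) →L[ℂ]
    ((X × (Fin m → ℂ)) →L[ℂ] (X × (Fin m → ℂ))) :=
  ((compL ℂ (X × (Fin m → ℂ)) X (X × (Fin m → ℂ))) (inl ℂ X (Fin m → ℂ))).comp
    ((compL ℂ (X × (Fin m → ℂ)) X X).flip (fst ℂ X (Fin m → ℂ)))

@[simp] lemma grushinΦ_apply (T : X →L[ℂ] X) (y : X × (Fin m → ℂ)) :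
    grushinΦ m T y = (T y.1, 0) := rfl

/-- Extraction of the bottom-right block. -/
noncomputable def grushinπ : ((X × (Fin m → ℂ)) →L[ℂ] (X × (Fin m → ℂ))) →L[ℂ]
    ((Fin m → ℂ) →L[ℂ] (Fin m → ℂ)) :=
  ((compL ℂ (Fin m → ℂ) (X × (Fin m → ℂ)) (Fin m → ℂ)) (snd ℂ X (Fin m → ℂ))).comp
    ((compL ℂ (Fin m → ℂ) (X × (Fin m → ℂ)) (X × (Fin m → ℂ))).flip (inr ℂ X (Fin m → ℂ)))

@[simp] lemma grushinπ_apply (T : (X × (Fin m → ℂ)) →L[ℂ] (X × (Fin m → ℂ)))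
    (x : Fin m → ℂ) : grushinπ m T x = (T (0, x)).2 := rfl

/-- The block operator `Eb(s)` built from the four inverse blocks. -/
noncomputable def grushinE (E : X →L[ℂ] X) (Ep : (Fin m → ℂ) →L[ℂ] X)
    (Em : X →L[ℂ] (Fin m → ℂ)) (Emp : (Fin m → ℂ) →L[ℂ] (Fin m → ℂ)) :
    (X × (Fin m → ℂ)) →L[ℂ] (X × (Fin m → ℂ)) :=
  (E.comp (fst ℂ X (Fin m → ℂ)) + Ep.comp (snd ℂ X (Fin m → ℂ))).prod
    (Em.comp (fst ℂ X (Fin m → ℂ)) + Emp.comp (snd ℂ X (Fin m → ℂ)))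

@[simp] lemma grushinE_apply (E : X →L[ℂ] X) (Ep : (Fin m → ℂ) →L[ℂ] X)
    (Em : X →L[ℂ] (Fin m → ℂ)) (Emp : (Fin m → ℂ) →L[ℂ] (Fin m → ℂ))
    (y : X × (Fin m → ℂ)) :
    grushinE m E Ep Em Emp y = (E y.1 + Ep y.2, Em y.1 + Emp y.2) := rfl

/-- The constant part of the Grushin block operator. -/
noncomputable def grushinC (Rm : (Fin m → ℂ) →L[ℂ] X) (Rp : X →L[ℂ] (Fin m → ℂ)) :
    (X × (Fin m → ℂ)) →L[ℂ] (X × (Fin m → ℂ)) :=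
  (Rm.comp (snd ℂ X (Fin m → ℂ))).prod (Rp.comp (fst ℂ X (Fin m → ℂ)))

@[simp] lemma grushinC_apply (Rm : (Fin m → ℂ) →L[ℂ] X) (Rp : X →L[ℂ] (Fin m → ℂ))
    (y : X × (Fin m → ℂ)) : grushinC m Rm Rp y = (Rm y.2, Rp y.1) := rfl

end GrushinAux

set_option maxHeartbeats 1600000
set_option synthInstance.maxHeartbeats 1000000

/-- **Derivatives of the effective Hamiltonian `E₋₊(s)` of a C² family of Grushin
problems.** If `s ↦ P(s)` is C² on an open interval `I ∋ 0` and for each `s ∈ I`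
the Grushin problem `Pb(s)(u, u₋) = (P(s)u + R₋u₋, R₊u)` is well-posed with inverse
blocks `E(s), E₊(s), E₋(s), E₋₊(s)`, then `E₋₊` is C² on `I`,
`E₋₊'(0) = −E₋ Ṗ E₊` and `E₋₊''(0) = 2 E₋ Ṗ E Ṗ E₊ − E₋ P̈ E₊`. -/
theorem grushin_Emp_derivatives
    {X : Type*} [NormedAddCommGroup X] [NormedSpace ℂ X] [CompleteSpace X]
    (m : ℕ) (hm : 1 ≤ m)
    (Rm : (Fin m → ℂ) →L[ℂ] X) (Rp : X →L[ℂ] (Fin m → ℂ))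
    (I : Set ℝ) (hI : IsOpen I) (h0 : (0 : ℝ) ∈ I) (hconn : I.OrdConnected)
    (P : ℝ → (X →L[ℂ] X)) (hP : ContDiffOn ℝ 2 P I)
    (E : ℝ → (X →L[ℂ] X)) (Ep : ℝ → ((Fin m → ℂ) →L[ℂ] X))
    (Em : ℝ → (X →L[ℂ] (Fin m → ℂ))) (Emp : ℝ → ((Fin m → ℂ) →L[ℂ] (Fin m → ℂ)))
    (hwp : ∀ s ∈ I,
      (∀ (u : X) (um : Fin m → ℂ),
        E s (P s u + Rm um) + Ep s (Rp u) = u ∧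
          Em s (P s u + Rm um) + Emp s (Rp u) = um) ∧
      (∀ (v : X) (vp : Fin m → ℂ),
        P s (E s v + Ep s vp) + Rm (Em s v + Emp s vp) = v ∧
          Rp (E s v + Ep s vp) = vp)) :
    ContDiffOn ℝ 2 Emp I ∧
    deriv Emp 0 = -((Em 0).comp ((deriv P 0).comp (Ep 0))) ∧
    deriv (deriv Emp) 0 =
      (2 : ℂ) • ((Em 0).comp ((deriv P 0).comp ((E 0).comp ((deriv P 0).comp (Ep 0)))))
        - (Em 0).comp ((deriv (deriv P) 0).comp (Ep 0)) := by
  classical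
  -- block operators
  set Pb : ℝ → ((X × (Fin m → ℂ)) →L[ℂ] (X × (Fin m → ℂ))) :=
    fun s => grushinΦ m (P s) + grushinC m Rm Rp with hPbdef
  set Eb : ℝ → ((X × (Fin m → ℂ)) →L[ℂ] (X × (Fin m → ℂ))) :=
    fun s => grushinE m (E s) (Ep s) (Em s) (Emp s) with hEbdef
  -- Eb s is the two-sided inverse of Pb s
  have h1 : ∀ s ∈ I, Eb s * Pb s = 1 := by
    intro s hs
    refine ContinuousLinearMap.ext fun y => ?_
    have h := (hwp s hs).1 y.1 y.2
    simp only [mul_apply_eq_comp, hPbdef, hEbdef, one_apply_eq_self, _root_.add_apply, grushinΦ_apply,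
      grushinC_apply, grushinE_apply, Prod.mk_add_mk, zero_add, Prod.ext_iff]
    exact h
  have h2 : ∀ s ∈ I, Pb s * Eb s = 1 := by
    intro s hs
    refine ContinuousLinearMap.ext fun y => ?_
    have h := (hwp s hs).2 y.1 y.2
    simp only [mul_apply_eq_comp, hPbdef, hEbdef, one_apply_eq_self, _root_.add_apply, grushinΦ_apply,
      grushinC_apply, grushinE_apply, Prod.mk_add_mk, zero_add, add_zero, Prod.ext_iff]
    exact h
  -- units
  set u : ∀ s, s ∈ I → ((X × (Fin m → ℂ)) →L[ℂ] (X × (Fin m → ℂ)))ˣ :=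
    fun s hs => ⟨Pb s, Eb s, h2 s hs, h1 s hs⟩ with hudef
  have hinv : ∀ s (hs : s ∈ I), Ring.inverse (Pb s) = Eb s := by
    intro s hs
    exact Ring.inverse_unit (u s hs)
  -- smoothness of Pb
  have hPbsmooth : ContDiffOn ℝ 2 Pb I := by
    exact (((grushinΦ m).restrictScalars ℝ).contDiff.comp_contDiffOn hP).add contDiffOn_const
  -- smoothness of Eb
  have hEbsmooth : ContDiffOn ℝ 2 Eb I := by
    intro s hs
    have h := (contDiffAt_ringInverse ℝ (u s hs)).comp_contDiffWithinAt s
      ((hPbsmooth s hs))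
    exact h.congr (fun t ht => (hinv t ht).symm) (hinv s hs).symm
  -- derivative facts for P
  have hPd : ∀ s ∈ I, HasDerivAt P (deriv P s) s := by
    intro s hs
    exact ((hP.contDiffAt (hI.mem_nhds hs)).differentiableAt two_ne_zero).hasDerivAt
  have hPderiv1 : ContDiffOn ℝ 1 (deriv P) I := by
    have := ContDiffOn.deriv_of_isOpen (m := 1) hP hI (by norm_num)
    simpa using this
  have hPdd : HasDerivAt (deriv P) (deriv (deriv P) 0) 0 :=
    ((hPderiv1.contDiffAt (hI.mem_nhds h0)).differentiableAt one_ne_zero).hasDerivAt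
  -- derivative of Pb
  have hPbd : ∀ s ∈ I, HasDerivAt Pb (grushinΦ m (deriv P s)) s := by
    intro s hs
    have h := (((grushinΦ m).restrictScalars ℝ).hasFDerivAt.comp_hasDerivAt s (hPd s hs))
    exact h.add_const (grushinC m Rm Rp)
  -- derivative of Eb
  have hEbd : ∀ s (hs : s ∈ I),
      HasDerivAt Eb (-(Eb s * grushinΦ m (deriv P s) * Eb s)) s := by
    intro s hs
    have h := (hasFDerivAt_ringInverse (𝕜 := ℝ) (u s hs)).comp_hasDerivAt s (hPbd s hs)
    have heq : (fun t => Ring.inverse (Pb t)) =ᶠ[nhds s] Eb := by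
      filter_upwards [hI.mem_nhds hs] with t ht using hinv t ht
    have h' := h.congr_of_eventuallyEq heq.symm
    convert h' using 1
    all_goals rfl
  -- Emp in terms of Eb
  have hπ : Emp = fun s => grushinπ m (Eb s) := by
    funext s
    ext x
    simp [hEbdef]
  -- C² of Emp
  have hEmpsmooth : ContDiffOn ℝ 2 Emp I := by
    rw [hπ]
    exact ((grushinπ m).restrictScalars ℝ).contDiff.comp_contDiffOn hEbsmooth
  refine ⟨hEmpsmooth, ?_, ?_⟩
  · -- first derivative
    have hd : HasDerivAt Emp
        (grushinπ m (-(Eb 0 * grushinΦ m (deriv P 0) * Eb 0))) 0 := by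
      rw [hπ]
      exact ((grushinπ m).restrictScalars ℝ).hasFDerivAt.comp_hasDerivAt 0 (hEbd 0 h0)
    rw [hd.deriv]
    ext x
    simp [mul_apply, hEbdef]
  · -- second derivative
    set Q : ℝ → ((X × (Fin m → ℂ)) →L[ℂ] (X × (Fin m → ℂ))) :=
      fun s => grushinΦ m (deriv P s) with hQdef
    set D : ℝ → ((X × (Fin m → ℂ)) →L[ℂ] (X × (Fin m → ℂ))) :=
      fun s => -(Eb s * Q s * Eb s) with hDdef
    have hQd : HasDerivAt Q (grushinΦ m (deriv (deriv P) 0)) 0 := by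
      have h := (((grushinΦ m).restrictScalars ℝ).hasFDerivAt).comp_hasDerivAt 0 hPdd
      exact h
    have hEbd0 : HasDerivAt Eb (D 0) 0 := hEbd 0 h0
    have hDd : HasDerivAt D
        (-(((D 0 * Q 0 + Eb 0 * grushinΦ m (deriv (deriv P) 0)) * Eb 0)
          + (Eb 0 * Q 0) * D 0)) 0 := by
      exact (((hEbd0.mul hQd).mul hEbd0)).neg
    -- deriv Emp agrees with π ∘ D near 0
    have hEmp_deriv_eq : deriv Emp =ᶠ[nhds 0] fun s => grushinπ m (D s) := by
      filter_upwards [hI.mem_nhds h0] with s hs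
      have hd : HasDerivAt Emp (grushinπ m (D s)) s := by
        rw [hπ]
        exact ((grushinπ m).restrictScalars ℝ).hasFDerivAt.comp_hasDerivAt s (hEbd s hs)
      exact hd.deriv
    rw [hEmp_deriv_eq.deriv_eq]
    have hd2 : HasDerivAt (fun s => grushinπ m (D s))
        (grushinπ m (-(((D 0 * Q 0 + Eb 0 * grushinΦ m (deriv (deriv P) 0)) * Eb 0)
          + (Eb 0 * Q 0) * D 0))) 0 := by
      have h := (((grushinπ m).restrictScalars ℝ).hasFDerivAt).comp_hasDerivAt 0 hDd
      exact h
    rw [hd2.deriv]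
    ext x
    simp [mul_apply, hEbdef, hDdef, hQdef, two_smul]
    abel
end

section
/- Let V_m(ξ) = 2 sin²(πξ/2) e^{−(ξ−1)²} and V_a(ξ) = 5(ξ−1) e^{−ξ²} for ξ ∈ ℤ, and let P̂ be the associated operator on ℓ²(ℤ²; ℂ). Then P̂ δ_{(1,0)} = 0; that is, 0 is an eigenvalue of P̂ with eigenvector δ_{(1,0)}. -/
/-- The Fourier-side representation of the 0th order operator
`P = ⟨D⟩⁻¹ D_{x₂} + sin x₁ (I − V_m(D_{x₁})) + (I − V_m(D_{x₁})) sin x₁ + V_a(D_{x₁})`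
on `𝕋²`, acting on sequences indexed by `ℤ²`. -/
noncomputable def PhatOp (Vm Va : ℤ → ℝ) (a : ℤ × ℤ → ℂ) : ℤ × ℤ → ℂ := fun n =>
  (((n.2 : ℝ) / Real.sqrt (1 + (n.1 : ℝ) ^ 2 + (n.2 : ℝ) ^ 2) + Va n.1 : ℝ) : ℂ) * a n
    + (((2 - Vm (n.1 - 1) - Vm n.1 : ℝ) : ℂ) / (2 * Complex.I)) * a (n.1 - 1, n.2)
    - (((2 - Vm n.1 - Vm (n.1 + 1) : ℝ) : ℂ) / (2 * Complex.I)) * a (n.1 + 1, n.2)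

/-- The delta sequence at `k ∈ ℤ²`. -/
def deltaSeq (k : ℤ × ℤ) : ℤ × ℤ → ℂ := fun n => if n = k then 1 else 0

/-- `V_m(ξ) = 2 sin²(πξ/2) e^{−(ξ−1)²}`. -/
noncomputable def VmEx1 (ξ : ℤ) : ℝ :=
  2 * Real.sin (Real.pi * (ξ : ℝ) / 2) ^ 2 * Real.exp (-((ξ : ℝ) - 1) ^ 2)

/-- `V_a(ξ) = 5(ξ−1) e^{−ξ²}`. -/
noncomputable def VaEx1 (ξ : ℤ) : ℝ :=
  5 * ((ξ : ℝ) - 1) * Real.exp (-(ξ : ℝ) ^ 2)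

lemma VmEx1_zero : VmEx1 0 = 0 := by
  simp [VmEx1]

lemma VmEx1_one : VmEx1 1 = 2 := by
  have : Real.pi * (1 : ℝ) / 2 = Real.pi / 2 := by ring
  simp [VmEx1, this, Real.sin_pi_div_two]

lemma VmEx1_two : VmEx1 2 = 0 := by
  have : Real.pi * (2 : ℝ) / 2 = Real.pi := by ring
  simp [VmEx1, this, Real.sin_pi]

lemma VaEx1_one : VaEx1 1 = 0 := by
  simp [VaEx1]

/-- **Example 1 of the paper:** `0` is an eigenvalue of `P̂` with eigenvector
`δ_{(1,0)}` (i.e. eigenfunction `e^{ix₁}/2π` of `P`). -/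
theorem Phat_ex1_eigenvalue_zero : PhatOp VmEx1 VaEx1 (deltaSeq (1, 0)) = 0 := by
  funext n
  obtain ⟨n1, n2⟩ := n
  simp only [PhatOp, deltaSeq, Pi.zero_apply, Prod.mk.injEq]
  by_cases h1 : n1 = 1 ∧ n2 = 0
  · obtain ⟨rfl, rfl⟩ := h1
    norm_num [VaEx1_one, VmEx1_zero, VmEx1_one, VmEx1_two]
  · by_cases h2 : n1 - 1 = 1 ∧ n2 = 0
    · obtain ⟨h2a, rfl⟩ := h2
      have : n1 = 2 := by omega
      subst this
      norm_num [VmEx1_one, VmEx1_two]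
    · by_cases h3 : n1 + 1 = 1 ∧ n2 = 0
      · obtain ⟨h3a, rfl⟩ := h3
        have : n1 = 0 := by omega
        subst this
        norm_num [VmEx1_zero, VmEx1_one]
      · simp only [h1, h2, h3, if_false]
        ring
end

section
/- Let V_m(ξ) = 2 sin²(πξ/2) e^{−(ξ²−1)²} and V_a(ξ) = 6(1−ξ²) e^{−(ξ−1)²} for ξ ∈ ℤ, and let P̂ be the associated operator on ℓ²(ℤ²; ℂ). Then P̂ δ_{(1,0)} = 0 and P̂ δ_{(−1,0)} = 0; in particular 0 is an eigenvalue of P̂ whose eigenspace has dimension at least 2. -/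
/-- `V_m(ξ) = 2 sin²(πξ/2) e^{−(ξ²−1)²}`. -/
noncomputable def VmEx2 (ξ : ℤ) : ℝ :=
  2 * Real.sin (Real.pi * (ξ : ℝ) / 2) ^ 2 * Real.exp (-((ξ : ℝ) ^ 2 - 1) ^ 2)

/-- `V_a(ξ) = 6(1−ξ²) e^{−(ξ−1)²}`. -/
noncomputable def VaEx2 (ξ : ℤ) : ℝ :=
  6 * (1 - (ξ : ℝ) ^ 2) * Real.exp (-((ξ : ℝ) - 1) ^ 2)

lemma Vm0 : VmEx2 0 = 0 := by simp [VmEx2]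
lemma Vm1 : VmEx2 1 = 2 := by
  have h : Real.pi * ((1:ℤ):ℝ) / 2 = Real.pi / 2 := by push_cast; ring
  simp [VmEx2, h, Real.sin_pi_div_two]
lemma Vmm1 : VmEx2 (-1) = 2 := by
  have h : Real.pi * ((-1:ℤ):ℝ) / 2 = -(Real.pi / 2) := by push_cast; ring
  rw [VmEx2, h, Real.sin_neg, Real.sin_pi_div_two]
  norm_num
lemma Vm2 : VmEx2 2 = 0 := by
  have h : Real.pi * ((2:ℤ):ℝ) / 2 = Real.pi := by push_cast; ring
  simp [VmEx2, h]
lemma Vmm2 : VmEx2 (-2) = 0 := by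
  have h : Real.pi * ((-2:ℤ):ℝ) / 2 = -Real.pi := by push_cast; ring
  rw [VmEx2, h, Real.sin_neg, Real.sin_pi]
  norm_num
lemma Va1 : VaEx2 1 = 0 := by norm_num [VaEx2]
lemma Vam1 : VaEx2 (-1) = 0 := by norm_num [VaEx2]

lemma ker_delta (k : ℤ) (hVa : VaEx2 k = 0)
    (hL : (2:ℝ) - VmEx2 (k - 1) - VmEx2 k = 0)
    (hR : (2:ℝ) - VmEx2 k - VmEx2 (k + 1) = 0) :
    PhatOp VmEx2 VaEx2 (deltaSeq (k, 0)) = 0 := by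
  funext n
  obtain ⟨x, y⟩ := n
  simp only [PhatOp, deltaSeq, Prod.mk.injEq, Pi.zero_apply]
  by_cases hy : y = 0
  · subst hy
    by_cases h1 : x = k
    · subst h1
      have e1 : ¬ (x - 1 = x) := by omega
      have e2 : ¬ (x + 1 = x) := by omega
      simp [e1, e2, hVa]
    · by_cases h2 : x = k + 1
      · subst h2
        have e0 : ¬ (k + 1 + 1 = k) := by omega
        have e1 : k + 1 - 1 = k := by ring
        simp [e0, e1, hR]
      · by_cases h3 : x = k - 1
        · subst h3
          have e0 : ¬ (k - 1 - 1 = k) := by omega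
          have e1 : k - 1 + 1 = k := by ring
          simp [e0, e1, h1, hL]
        · have e1 : ¬ (x - 1 = k) := by omega
          have e2 : ¬ (x + 1 = k) := by omega
          simp [h1, e1, e2]
  · simp [hy]


/-- **Example 2 of the paper:** `0` is an eigenvalue of `P̂` with multiplicity at
least `2`: both `δ_{(1,0)}` and `δ_{(−1,0)}` are in the kernel, and they are
linearly independent. -/
theorem Phat_ex2_eigenvalue_zero_multiplicity_two :
    PhatOp VmEx2 VaEx2 (deltaSeq (1, 0)) = 0 ∧
    PhatOp VmEx2 VaEx2 (deltaSeq (-1, 0)) = 0 ∧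
    LinearIndependent ℂ ![deltaSeq (1, 0), deltaSeq (-1, 0)] := by
  refine ⟨?_, ?_, ?_⟩
  · exact ker_delta 1 Va1 (by norm_num [Vm0, Vm1]) (by norm_num [Vm1, Vm2])
  · exact ker_delta (-1) Vam1 (by norm_num [Vmm2, Vmm1]) (by norm_num [Vmm1, Vm0])
  · rw [LinearIndependent.pair_iff]
    intro s t h
    have h1 := congrFun h (1, 0)
    have h2 := congrFun h (-1, 0)
    simp [deltaSeq] at h1 h2
    exact ⟨h1, h2⟩
end
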